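/- For every positive integer l and every nonnegative integer n, the number of representations of n as a sum a + a' with a < a' both in A_l equals the number of representations of n as b + b' with b < b' both in B_l, where A_l is the set of integers in [0, 2^l - 1] with an even number of 1's in binary and B_l is the set of those with an odd number of 1's in binary. -/

import Mathlib

open Set

/-- R S n: number of pairs (s,s') with s,s' ∈ S, s < s', s+s' = n. -/
noncomputable def R (S : Set ℕ) (n : ℕ) : ℕ :=
  {p : ℕ × ℕ | p.1 ∈ S ∧ p.2 ∈ S ∧ p.1 < p.2 ∧ p.1 + p.2 = n}.ncard

/-- Thue–Morse set: nonnegative integers with an even number of binary 1's. -/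
def A : Set ℕ := {n | Even ((Nat.digits 2 n).count 1)}

def B : Set ℕ := Aᶜ

def Al (k : ℕ) : Set ℕ := A ∩ Set.Icc 0 (2 ^ k - 1)

def Bl (k : ℕ) : Set ℕ := B ∩ Set.Icc 0 (2 ^ k - 1)

/-- bit count -/
def cnt (n : ℕ) : ℕ := (Nat.digits 2 n).count 1

lemma cnt_rec (n : ℕ) : cnt n = n % 2 + cnt (n / 2) := by
  rcases Nat.eq_zero_or_pos n with h | h
  · simp [h, cnt]
  · unfold cnt
    rw [Nat.digits_def' (by norm_num) h, List.count_cons]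
    have : n % 2 = 0 ∨ n % 2 = 1 := Nat.mod_two_eq_zero_or_one n
    rcases this with h2 | h2 <;> simp [h2] <;> omega

lemma cnt_xor (a : ℕ) : ∀ b, cnt (a ^^^ b) % 2 = (cnt a + cnt b) % 2 := by
  induction a using Nat.strong_induction_on with
  | _ a ih =>
    intro b
    rcases Nat.eq_zero_or_pos a with h | h
    · simp [h, cnt]
    · have hdiv : (a ^^^ b) / 2 = a / 2 ^^^ b / 2 := Nat.xor_div_two
      have hmod : (a ^^^ b) % 2 = (a + b) % 2 := Nat.xor_mod_two_eq
      have h1 := cnt_rec (a ^^^ b)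
      have h2 := cnt_rec a
      have h3 := cnt_rec b
      have h4 := ih (a / 2) (Nat.div_lt_self h (by norm_num)) (b / 2)
      rw [hdiv] at h1
      omega

lemma cnt_two_pow (k : ℕ) : cnt (2 ^ k) = 1 := by
  induction k with
  | zero => simp [cnt]
  | succ k ih =>
    have := cnt_rec (2 ^ (k + 1))
    have h2 : 2 ^ (k + 1) % 2 = 0 := by
      simp [pow_succ, Nat.mul_mod_left]
    have h3 : 2 ^ (k + 1) / 2 = 2 ^ k := by
      simp [pow_succ]
    rw [h2, h3, ih] at this
    omega

lemma xor_two_pow_of_testBit_false {a k : ℕ} (h : a.testBit k = false) :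
    a ^^^ 2 ^ k = a + 2 ^ k := by
  induction k generalizing a with
  | zero =>
    have h0 : a % 2 = 0 := by
      simpa using h
    have hd : (a ^^^ 1) / 2 = a / 2 := by
      rw [Nat.xor_div_two]; norm_num
    have hm : (a ^^^ 1) % 2 = (a + 1) % 2 := Nat.xor_mod_two_eq
    have e1 := Nat.div_add_mod (a ^^^ 1) 2
    have e2 := Nat.div_add_mod a 2
    simp only [pow_zero]
    omega
  | succ k ih =>
    have hb : (a / 2).testBit k = false := by
      rw [Nat.testBit_div_two]; exact h
    have hih := ih hb
    have hd : (a ^^^ 2 ^ (k + 1)) / 2 = a / 2 ^^^ 2 ^ k := by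
      rw [Nat.xor_div_two]; simp [pow_succ]
    have hm : (a ^^^ 2 ^ (k + 1)) % 2 = (a + 2 ^ (k + 1)) % 2 := Nat.xor_mod_two_eq
    have hp : 2 ^ (k + 1) = 2 * 2 ^ k := by ring
    have e1 := Nat.div_add_mod (a ^^^ 2 ^ (k + 1)) 2
    have e2 := Nat.div_add_mod a 2
    omega

lemma xor_two_pow_of_testBit_true {a k : ℕ} (h : a.testBit k = true) :
    (a ^^^ 2 ^ k) + 2 ^ k = a := by
  have hb : (a ^^^ 2 ^ k).testBit k = false := by
    simp [Nat.testBit_xor, h, Nat.testBit_two_pow_self]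
  have := xor_two_pow_of_testBit_false hb
  rw [Nat.xor_assoc, Nat.xor_self, Nat.xor_zero] at this
  omega


/-- lowest differing bit value of a pair. -/
def dd (p : ℕ × ℕ) : ℕ := 2 ^ ((p.1 ^^^ p.2).factorization 2)

/-- flip lowest differing bit in both coordinates, reorder. -/
def flp (p : ℕ × ℕ) : ℕ × ℕ :=
  (min (p.1 ^^^ dd p) (p.2 ^^^ dd p), max (p.1 ^^^ dd p) (p.2 ^^^ dd p))

lemma testBit_factorization {x : ℕ} (hx : x ≠ 0) :
    x.testBit (x.factorization 2) = true := by
  have h1 : ¬ (2 ∣ x / 2 ^ (x.factorization 2)) := Nat.not_dvd_ordCompl Nat.prime_two hx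
  rw [Nat.testBit_eq_decide_div_mod_eq]
  simp only [decide_eq_true_eq]
  omega

lemma parity_flip (a k : ℕ) : Even (cnt (a ^^^ 2 ^ k)) ↔ ¬ Even (cnt a) := by
  have h := cnt_xor a (2 ^ k)
  rw [cnt_two_pow] at h
  rw [Nat.even_iff, Nat.even_iff]
  omega

lemma pair_cases (a b : ℕ) : ((min a b, max a b) : ℕ × ℕ) = (a, b) ∨
    ((min a b, max a b) : ℕ × ℕ) = (b, a) := by
  rcases le_total a b with h | h
  · left; simp [min_eq_left h, max_eq_right h]
  · right; simp [min_eq_right h, max_eq_left h]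

lemma flp_cases (p : ℕ × ℕ) : flp p = (p.1 ^^^ dd p, p.2 ^^^ dd p) ∨
    flp p = (p.2 ^^^ dd p, p.1 ^^^ dd p) :=
  pair_cases _ _

lemma xor_sum {p : ℕ × ℕ} (h : p.1 ≠ p.2) :
    (p.1 ^^^ dd p) + (p.2 ^^^ dd p) = p.1 + p.2 := by
  have hx : p.1 ^^^ p.2 ≠ 0 := by
    intro h0
    exact h (by simpa [xor_eq_zero_iff] using h0)
  have htb := testBit_factorization hx
  rw [Nat.testBit_xor] at htb
  set k := (p.1 ^^^ p.2).factorization 2 with hk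
  have hdd : dd p = 2 ^ k := rfl
  rw [hdd]
  cases h1 : p.1.testBit k with
  | true =>
    have h2 : p.2.testBit k = false := by
      cases h2 : p.2.testBit k
      · rfl
      · rw [h1, h2] at htb; simp at htb
    have e1 := xor_two_pow_of_testBit_true h1
    have e2 := xor_two_pow_of_testBit_false h2
    omega
  | false =>
    have h2 : p.2.testBit k = true := by
      cases h2 : p.2.testBit k
      · rw [h1, h2] at htb; simp at htb
      · rfl
    have e1 := xor_two_pow_of_testBit_false h1
    have e2 := xor_two_pow_of_testBit_true h2
    omega

lemma xor_cancel (a d : ℕ) : a ^^^ d ^^^ d = a := by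
  rw [Nat.xor_assoc, Nat.xor_self, Nat.xor_zero]

lemma dd_flp (p : ℕ × ℕ) : dd (flp p) = dd p := by
  have : (flp p).1 ^^^ (flp p).2 = p.1 ^^^ p.2 := by
    rcases flp_cases p with h | h <;> rw [h]
    · show (p.1 ^^^ dd p) ^^^ (p.2 ^^^ dd p) = _
      rw [Nat.xor_comm p.2 (dd p), ← Nat.xor_assoc, xor_cancel]
    · show (p.2 ^^^ dd p) ^^^ (p.1 ^^^ dd p) = _
      rw [Nat.xor_comm p.1 (dd p), ← Nat.xor_assoc, xor_cancel, Nat.xor_comm]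
  unfold dd
  rw [this]

lemma flp_flp {p : ℕ × ℕ} (h12 : p.1 < p.2) : flp (flp p) = p := by
  have hd := dd_flp p
  rcases flp_cases p with h | h <;>
    · rw [show flp (flp p) = (min ((flp p).1 ^^^ dd (flp p)) ((flp p).2 ^^^ dd (flp p)),
        max ((flp p).1 ^^^ dd (flp p)) ((flp p).2 ^^^ dd (flp p))) from rfl, hd, h]
      simp only [xor_cancel]
      first
        | rw [min_eq_left h12.le, max_eq_right h12.le]
        | rw [min_eq_right h12.le, max_eq_left h12.le]

lemma dd_lt {p : ℕ × ℕ} {l : ℕ} (h : p.1 ≠ p.2) (h1 : p.1 < 2 ^ l) (h2 : p.2 < 2 ^ l) :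
    dd p < 2 ^ l := by
  have hx : p.1 ^^^ p.2 ≠ 0 := by
    intro h0
    exact h (by simpa [xor_eq_zero_iff] using h0)
  have hle : dd p ≤ p.1 ^^^ p.2 :=
    Nat.ge_two_pow_of_testBit (testBit_factorization hx)
  exact lt_of_le_of_lt hle (Nat.xor_lt_two_pow h1 h2)

lemma flp_mem_props {p : ℕ × ℕ} {l : ℕ} (h12 : p.1 < p.2)
    (h1 : p.1 < 2 ^ l) (h2 : p.2 < 2 ^ l) :
    (flp p).1 < (flp p).2 ∧ (flp p).1 + (flp p).2 = p.1 + p.2 ∧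
    (flp p).1 < 2 ^ l ∧ (flp p).2 < 2 ^ l ∧
    ((Even (cnt p.1) ∧ Even (cnt p.2)) →
      ¬ Even (cnt (flp p).1) ∧ ¬ Even (cnt (flp p).2)) ∧
    ((¬ Even (cnt p.1) ∧ ¬ Even (cnt p.2)) →
      Even (cnt (flp p).1) ∧ Even (cnt (flp p).2)) := by
  have hne : p.1 ≠ p.2 := h12.ne
  have hxne : p.1 ^^^ dd p ≠ p.2 ^^^ dd p := by
    intro h
    apply hne
    have := congrArg (· ^^^ dd p) h
    simpa [xor_cancel] using this
  have hdl : dd p < 2 ^ l := dd_lt hne h1 h2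
  have hb1 : p.1 ^^^ dd p < 2 ^ l := Nat.xor_lt_two_pow h1 hdl
  have hb2 : p.2 ^^^ dd p < 2 ^ l := Nat.xor_lt_two_pow h2 hdl
  have hp1 : Even (cnt (p.1 ^^^ dd p)) ↔ ¬ Even (cnt p.1) := parity_flip p.1 _
  have hp2 : Even (cnt (p.2 ^^^ dd p)) ↔ ¬ Even (cnt p.2) := parity_flip p.2 _
  have hsum := xor_sum hne
  refine ⟨?_, ?_, ?_, ?_, ?_, ?_⟩
  · exact min_lt_max.mpr hxne
  · show min _ _ + max _ _ = _
    rw [min_add_max]; exact hsum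
  all_goals rcases flp_cases p with h | h <;> rw [h] <;> simp only [] <;> tauto

theorem stmt0 (l : ℕ) (hl : 0 < l) (n : ℕ) : R (Al l) n = R (Bl l) n := by
  have hpow : 0 < 2 ^ l := Nat.pow_pos (by norm_num)
  have hIcc : ∀ x : ℕ, x ∈ Set.Icc 0 (2 ^ l - 1) ↔ x < 2 ^ l := by
    intro x
    simp only [Set.mem_Icc, Nat.zero_le, true_and]
    omega
  have hA : ∀ x : ℕ, x ∈ A ↔ Even (cnt x) := fun x => Iff.rfl
  have hB : ∀ x : ℕ, x ∈ B ↔ ¬ Even (cnt x) := fun x => Iff.rfl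
  set SA : Set (ℕ × ℕ) :=
    {p : ℕ × ℕ | p.1 ∈ Al l ∧ p.2 ∈ Al l ∧ p.1 < p.2 ∧ p.1 + p.2 = n} with hSA
  set SB : Set (ℕ × ℕ) :=
    {p : ℕ × ℕ | p.1 ∈ Bl l ∧ p.2 ∈ Bl l ∧ p.1 < p.2 ∧ p.1 + p.2 = n} with hSB
  have hmemA : ∀ p : ℕ × ℕ, p ∈ SA ↔
      Even (cnt p.1) ∧ Even (cnt p.2) ∧ p.1 < 2 ^ l ∧ p.2 < 2 ^ l ∧
      p.1 < p.2 ∧ p.1 + p.2 = n := by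
    intro p
    simp only [hSA, Set.mem_setOf_eq, Al, Set.mem_inter_iff, hIcc, hA]
    tauto
  have hmemB : ∀ p : ℕ × ℕ, p ∈ SB ↔
      ¬ Even (cnt p.1) ∧ ¬ Even (cnt p.2) ∧ p.1 < 2 ^ l ∧ p.2 < 2 ^ l ∧
      p.1 < p.2 ∧ p.1 + p.2 = n := by
    intro p
    simp only [hSB, Set.mem_setOf_eq, Bl, B, Set.mem_inter_iff, hIcc,
      Set.mem_compl_iff, hA]
    tauto
  have hAB : ∀ p ∈ SA, flp p ∈ SB := by
    intro p hp
    rw [hmemA] at hp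
    obtain ⟨he1, he2, hb1, hb2, h12, hs⟩ := hp
    obtain ⟨c1, c2, c3, c4, c5, c6⟩ := flp_mem_props h12 hb1 hb2
    rw [hmemB]
    have := c5 ⟨he1, he2⟩
    exact ⟨this.1, this.2, c3, c4, c1, by omega⟩
  have hBA : ∀ p ∈ SB, flp p ∈ SA := by
    intro p hp
    rw [hmemB] at hp
    obtain ⟨he1, he2, hb1, hb2, h12, hs⟩ := hp
    obtain ⟨c1, c2, c3, c4, c5, c6⟩ := flp_mem_props h12 hb1 hb2
    rw [hmemA]
    have := c6 ⟨he1, he2⟩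
    exact ⟨this.1, this.2, c3, c4, c1, by omega⟩
  have himg : SB = flp '' SA := by
    apply Set.Subset.antisymm
    · intro q hq
      refine ⟨flp q, hBA q hq, ?_⟩
      exact flp_flp ((hmemB q).mp hq).2.2.2.2.1
    · rintro _ ⟨p, hp, rfl⟩
      exact hAB p hp
  have hinj : Set.InjOn flp SA := by
    intro p hp q hq hfe
    have := congrArg flp hfe
    rwa [flp_flp ((hmemA p).mp hp).2.2.2.2.1,
      flp_flp ((hmemA q).mp hq).2.2.2.2.1] at this
  show SA.ncard = SB.ncard
  rw [himg, Set.ncard_image_of_injOn hinj]
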